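/- There exist c > 0 and K ∈ ℕ (depending on β, m, δ) such that for all τ₁, τ₂, τ₃ ∈ ℝ and k₁, k₂, k₃ ∈ ℤ \ {0} with τ₁ + τ₂ + τ₃ = 0, k₁ + k₂ + k₃ = 0 and max{|k₁|, |k₂|, |k₃|} ≥ K, one has max_{j∈{1,2,3}} ⟨(τ_j - λ_{k_j})/⟨k_j⟩^δ⟩ ≥ c · (max_j ⟨k_j⟩)^{2m - δ} · min_j ⟨k_j⟩. -/

import Mathlib

/-- The Japanese bracket `⟨x⟩ = (1 + |x|²)^{1/2}`. -/
noncomputable def jbr (x : ℝ) : ℝ := Real.sqrt (1 + x ^ 2)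

private lemma jbr_one_le (x : ℝ) : 1 ≤ jbr x := by
  unfold jbr
  nlinarith [Real.sq_sqrt (show (0:ℝ) ≤ 1 + x^2 by positivity), Real.sqrt_nonneg (1+x^2),
    sq_nonneg x]

private lemma jbr_pos (x : ℝ) : 0 < jbr x := lt_of_lt_of_le one_pos (jbr_one_le x)

private lemma abs_le_jbr (x : ℝ) : |x| ≤ jbr x := by
  rw [jbr, ← Real.sqrt_sq_eq_abs]; exact Real.sqrt_le_sqrt (by nlinarith)

private lemma jbr_le_sqrt2 (x : ℝ) (h : 1 ≤ |x|) : jbr x ≤ Real.sqrt 2 * |x| := by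
  rw [jbr, ← Real.sqrt_sq_eq_abs, ← Real.sqrt_mul (by norm_num)]
  exact Real.sqrt_le_sqrt (by nlinarith [sq_abs x])

private lemma key1 (α β m r : ℝ) (hα : 0 < α) (hβ : 0 < β) (hr : 0 < r) (hrm : r < m)
    (a b : ℝ) (ha : 1 ≤ a) (hab : a ≤ b)
    (hC : α * (2*r+1) / (β * m / (2:ℝ) ^ (2*m)) ≤ (a+b) ^ (2*m - 2*r)) :
    β * m / (2:ℝ) ^ (2*m) * a * (a+b) ^ (2*m)
      ≤ β * ((a+b)*(a+b)^(2*m) - a*a^(2*m) - b*b^(2*m))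
        - α * ((a+b)*(a+b)^(2*r) - a*a^(2*r) - b*b^(2*r)) := by
  have hm : 0 < m := hr.trans hrm
  have ha0 : (0:ℝ) < a := by linarith
  have hb0 : (0:ℝ) < b := by linarith
  have hs0 : (0:ℝ) < a + b := by linarith
  have h2m : (0:ℝ) < (2:ℝ) ^ (2*m) := Real.rpow_pos_of_pos two_pos _
  have hc₀ : 0 < β * m / (2:ℝ) ^ (2*m) := by positivity
  set s : ℝ := a + b with hs
  -- Step 1: b*b^(2m) + (2m+1)*a*b^(2m) ≤ s*s^(2m)
  have bern1 : 1 + (2*m+1) * (a/b) ≤ (1 + a/b) ^ (2*m+1) :=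
    one_add_mul_self_le_rpow_one_add
      (by have := div_nonneg ha0.le hb0.le; linarith) (by linarith)
  have h1 : (1 + (2*m+1) * (a/b)) * b ^ (2*m+1) ≤ (1 + a/b) ^ (2*m+1) * b ^ (2*m+1) :=
    mul_le_mul_of_nonneg_right bern1 (Real.rpow_nonneg hb0.le _)
  have h2 : (1 + a/b) ^ (2*m+1) * b ^ (2*m+1) = s ^ (2*m+1) := by
    rw [← Real.mul_rpow (by positivity) hb0.le]
    congr 1; field_simp; ring
  have hbp : b ^ (2*m+1) = b ^ (2*m) * b := Real.rpow_add_one hb0.ne' _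
  have hsp : s ^ (2*m+1) = s ^ (2*m) * s := Real.rpow_add_one hs0.ne' _
  have h3 : (1 + (2*m+1) * (a/b)) * b ^ (2*m+1)
      = b * b ^ (2*m) + (2*m+1) * a * b ^ (2*m) := by
    rw [hbp]; field_simp
  have step1 : b * b ^ (2*m) + (2*m+1) * a * b ^ (2*m) ≤ s * s ^ (2*m) := by
    rw [← h3]; rw [h2, hsp] at h1; linarith
  -- Step 2: a*a^(2m) ≤ a*b^(2m)
  have step2 : a * a ^ (2*m) ≤ a * b ^ (2*m) :=
    mul_le_mul_of_nonneg_left (Real.rpow_le_rpow ha0.le hab (by linarith)) ha0.le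
  -- Step 3: s^(2m)/2^(2m) ≤ b^(2m)
  have step3 : s ^ (2*m) / (2:ℝ) ^ (2*m) ≤ b ^ (2*m) := by
    rw [← Real.div_rpow hs0.le (by norm_num)]
    exact Real.rpow_le_rpow (by positivity) (by linarith) (by linarith)
  have hP : 2 * (β * m / (2:ℝ) ^ (2*m)) * (a * s ^ (2*m))
      ≤ β * (s*s^(2*m) - a*a^(2*m) - b*b^(2*m)) := by
    have e1 : 2*m * a * b ^ (2*m) ≤ s*s^(2*m) - a*a^(2*m) - b*b^(2*m) := by linarith
    have e2 : 2*m * a * (s ^ (2*m) / (2:ℝ) ^ (2*m)) ≤ 2*m * a * b ^ (2*m) :=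
      mul_le_mul_of_nonneg_left step3 (by positivity)
    have e3 : β * (2*m * a * (s ^ (2*m) / (2:ℝ) ^ (2*m)))
        ≤ β * (s*s^(2*m) - a*a^(2*m) - b*b^(2*m)) := by
      apply mul_le_mul_of_nonneg_left (le_trans e2 e1) hβ.le
    calc 2 * (β * m / (2:ℝ) ^ (2*m)) * (a * s ^ (2*m))
        = β * (2*m * a * (s ^ (2*m) / (2:ℝ) ^ (2*m))) := by field_simp
      _ ≤ _ := e3
  -- Step 4: Q ≤ (2r+1)*a*s^(2r)
  have has : a / s ≤ 1 := by rw [div_le_one hs0]; linarith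
  have bern2 : 1 + (2*r+1) * (-(a/s)) ≤ (1 + -(a/s)) ^ (2*r+1) :=
    one_add_mul_self_le_rpow_one_add (by linarith) (by linarith)
  have h1as : (0:ℝ) ≤ 1 - a/s := by linarith
  have h4 : (1 + -(a/s)) ^ (2*r+1) * s ^ (2*r+1) = b ^ (2*r+1) := by
    rw [← Real.mul_rpow (by linarith) hs0.le]
    congr 1; field_simp; ring
  have h5 : (1 + (2*r+1) * (-(a/s))) * s ^ (2*r+1) ≤ b ^ (2*r+1) := by
    rw [← h4]
    exact mul_le_mul_of_nonneg_right bern2 (Real.rpow_nonneg hs0.le _)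
  have hbq : b ^ (2*r+1) = b ^ (2*r) * b := Real.rpow_add_one hb0.ne' _
  have hsq : s ^ (2*r+1) = s ^ (2*r) * s := Real.rpow_add_one hs0.ne' _
  have h6 : (1 + (2*r+1) * (-(a/s))) * s ^ (2*r+1)
      = s * s ^ (2*r) - (2*r+1) * a * s ^ (2*r) := by
    rw [hsq]; field_simp; ring
  have hAr : 0 ≤ a * a ^ (2*r) := by positivity
  have stepQ : s*s^(2*r) - a*a^(2*r) - b*b^(2*r) ≤ (2*r+1) * a * s ^ (2*r) := by
    rw [h6] at h5; rw [hbq] at h5; linarith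
  -- Step 5: α*Q ≤ c₀*a*s^(2m) using hC
  have hse : s ^ (2*r) * s ^ (2*m - 2*r) = s ^ (2*m) := by
    rw [← Real.rpow_add hs0]; ring_nf
  have hC' : α * (2*r+1) ≤ s ^ (2*m-2*r) * (β * m / (2:ℝ) ^ (2*m)) :=
    (div_le_iff₀ hc₀).mp hC
  have hQ : α * (s*s^(2*r) - a*a^(2*r) - b*b^(2*r))
      ≤ β * m / (2:ℝ) ^ (2*m) * (a * s ^ (2*m)) := by
    have e0 : 0 ≤ a * s ^ (2*r) := by positivity
    have e1 : α * (s*s^(2*r) - a*a^(2*r) - b*b^(2*r)) ≤ (α * (2*r+1)) * (a * s ^ (2*r)) := by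
      have h := mul_le_mul_of_nonneg_left stepQ hα.le
      have h' : α * ((2*r+1) * a * s ^ (2*r)) = (α * (2*r+1)) * (a * s ^ (2*r)) := by ring
      linarith
    have e3 : (α * (2*r+1)) * (a * s ^ (2*r))
        ≤ (s ^ (2*m-2*r) * (β * m / (2:ℝ) ^ (2*m))) * (a * s ^ (2*r)) :=
      mul_le_mul_of_nonneg_right hC' e0
    have e4 : (s ^ (2*m-2*r) * (β * m / (2:ℝ) ^ (2*m))) * (a * s ^ (2*r))
        = β * m / (2:ℝ) ^ (2*m) * (a * s ^ (2*m)) := by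
      rw [← hse]; ring
    exact le_trans e1 (le_trans e3 (le_of_eq e4))
  linarith only [hP, hQ]

/-- there are `c > 0` and `K ∈ ℕ` such that for all `τ₁+τ₂+τ₃ = 0` and
nonzero `k₁+k₂+k₃ = 0` with `max |k_j| ≥ K`,
`max_j ⟨(τ_j - λ_{k_j})/⟨k_j⟩^δ⟩ ≥ c (max_j ⟨k_j⟩)^{2m-δ} (min_j ⟨k_j⟩)`. -/
theorem modulation_max_resonance_lower_bound
    (α β μ m r δ : ℝ) (hα : 0 < α) (hβ : 0 < β) (hr : 0 < r) (hrm : r < m) (hδ : 0 < δ)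
    (lam : ℤ → ℝ)
    (hlam : ∀ k : ℤ, lam k =
      -β * (k : ℝ) * |(k : ℝ)| ^ (2 * m) + α * (k : ℝ) * |(k : ℝ)| ^ (2 * r) - 2 * μ * (k : ℝ)) :
    ∃ c > 0, ∃ K : ℕ, ∀ τ₁ τ₂ τ₃ : ℝ, ∀ k₁ k₂ k₃ : ℤ,
      k₁ ≠ 0 → k₂ ≠ 0 → k₃ ≠ 0 → τ₁ + τ₂ + τ₃ = 0 → k₁ + k₂ + k₃ = 0 →
      (K : ℤ) ≤ max |k₁| (max |k₂| |k₃|) →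
      c * max (jbr (k₁ : ℝ)) (max (jbr (k₂ : ℝ)) (jbr (k₃ : ℝ))) ^ (2 * m - δ)
          * min (jbr (k₁ : ℝ)) (min (jbr (k₂ : ℝ)) (jbr (k₃ : ℝ)))
        ≤ max (jbr ((τ₁ - lam k₁) / jbr (k₁ : ℝ) ^ δ))
            (max (jbr ((τ₂ - lam k₂) / jbr (k₂ : ℝ) ^ δ))
              (jbr ((τ₃ - lam k₃) / jbr (k₃ : ℝ) ^ δ))) := by
  have hm : 0 < m := hr.trans hrm
  have h2m : (0:ℝ) < (2:ℝ) ^ (2*m) := Real.rpow_pos_of_pos two_pos _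
  set c₀ : ℝ := β * m / (2:ℝ) ^ (2*m) with hc₀def
  have hc₀ : 0 < c₀ := by positivity
  set C : ℝ := α * (2*r+1) / c₀ with hCdef
  have hCpos : 0 < C := by positivity
  have he : (0:ℝ) < 2*m - 2*r := by linarith
  have hodd : ∀ k : ℤ, lam (-k) = - lam k := by
    intro k; rw [hlam, hlam]; push_cast; rw [abs_neg]; ring
  -- canonical configuration lemma
  have key2 : ∀ p q : ℤ, 0 < p → 0 < q → C ≤ ((p:ℝ)+(q:ℝ)) ^ (2*m-2*r) →
      c₀ * min (p:ℝ) (q:ℝ) * ((p:ℝ)+(q:ℝ)) ^ (2*m) ≤ |lam p + lam q + lam (-(p+q))| := by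
    intro p q hp hq hCs
    have hpR : (1:ℝ) ≤ (p:ℝ) := by exact_mod_cast hp
    have hqR : (1:ℝ) ≤ (q:ℝ) := by exact_mod_cast hq
    have hap : |(p:ℝ)| = (p:ℝ) := abs_of_pos (by linarith)
    have haq : |(q:ℝ)| = (q:ℝ) := abs_of_pos (by linarith)
    have hsum : lam p + lam q + lam (-(p+q)) =
        β * (((p:ℝ)+q)*((p:ℝ)+q)^(2*m) - (p:ℝ)*(p:ℝ)^(2*m) - (q:ℝ)*(q:ℝ)^(2*m))
        - α * (((p:ℝ)+q)*((p:ℝ)+q)^(2*r) - (p:ℝ)*(p:ℝ)^(2*r) - (q:ℝ)*(q:ℝ)^(2*r)) := by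
      rw [hlam p, hlam q, hlam (-(p+q))]
      push_cast
      rw [abs_neg, abs_of_pos (show (0:ℝ) < (p:ℝ)+(q:ℝ) by linarith), hap, haq]
      ring
    rw [hsum]
    rcases le_total (p:ℝ) (q:ℝ) with h | h
    · rw [min_eq_left h]
      exact le_trans (key1 α β m r hα hβ hr hrm _ _ hpR h hCs) (le_abs_self _)
    · rw [min_eq_right h]
      have hqp : (q:ℝ) + (p:ℝ) = (p:ℝ) + (q:ℝ) := add_comm _ _
      have this1 := key1 α β m r hα hβ hr hrm (q:ℝ) (p:ℝ) hqR h (by rw [hqp]; exact hCs)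
      rw [hqp] at this1
      have h2 : β * (((p:ℝ)+q)*((p:ℝ)+q)^(2*m) - (q:ℝ)*(q:ℝ)^(2*m) - (p:ℝ)*(p:ℝ)^(2*m))
          - α * (((p:ℝ)+q)*((p:ℝ)+q)^(2*r) - (q:ℝ)*(q:ℝ)^(2*r) - (p:ℝ)*(p:ℝ)^(2*r))
          = β * (((p:ℝ)+q)*((p:ℝ)+q)^(2*m) - (p:ℝ)*(p:ℝ)^(2*m) - (q:ℝ)*(q:ℝ)^(2*m))
          - α * (((p:ℝ)+q)*((p:ℝ)+q)^(2*r) - (p:ℝ)*(p:ℝ)^(2*r) - (q:ℝ)*(q:ℝ)^(2*r)) := by ring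
      rw [h2] at this1
      exact le_trans this1 (le_abs_self _)
  -- full integer lemma for the triple
  have key3 : ∀ k₁ k₂ k₃ : ℤ, k₁ ≠ 0 → k₂ ≠ 0 → k₃ ≠ 0 → k₁ + k₂ + k₃ = 0 →
      C ≤ ((max |k₁| (max |k₂| |k₃|) : ℤ) : ℝ) ^ (2*m-2*r) →
      c₀ * ((min |k₁| (min |k₂| |k₃|) : ℤ) : ℝ)
        * ((max |k₁| (max |k₂| |k₃|) : ℤ) : ℝ) ^ (2*m) ≤ |lam k₁ + lam k₂ + lam k₃| := by
    have main : ∀ a b c : ℤ, a ≠ 0 → b ≠ 0 → c ≠ 0 → a + b + c = 0 → |a| ≤ |c| → |b| ≤ |c| →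
        C ≤ ((max |a| (max |b| |c|) : ℤ) : ℝ) ^ (2*m-2*r) →
        c₀ * ((min |a| (min |b| |c|) : ℤ) : ℝ)
          * ((max |a| (max |b| |c|) : ℤ) : ℝ) ^ (2*m) ≤ |lam a + lam b + lam c| := by
      intro a b c ha hb hc hsum hac hbc hCs
      rcases lt_or_gt_of_ne hc with hc0 | hc0
      · have hfacts : 0 < a ∧ 0 < b ∧ min |a| (min |b| |c|) = min a b ∧
            max |a| (max |b| |c|) = a + b ∧ -(a+b) = c := by
          simp only [Int.abs_eq_natAbs] at hac hbc ⊢; omega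
        obtain ⟨ha0, hb0, hmin, hmax, hceq⟩ := hfacts
        rw [hmin, hmax]
        rw [hmax] at hCs
        have h := key2 a b ha0 hb0 (by push_cast at hCs ⊢; exact hCs)
        rw [hceq] at h
        push_cast at h ⊢
        exact h
      · have hfacts : 0 < -a ∧ 0 < -b ∧ min |a| (min |b| |c|) = min (-a) (-b) ∧
            max |a| (max |b| |c|) = (-a) + (-b) := by
          simp only [Int.abs_eq_natAbs] at hac hbc ⊢; omega
        obtain ⟨ha0, hb0, hmin, hmax⟩ := hfacts
        rw [hmin, hmax]
        rw [hmax] at hCs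
        have h := key2 (-a) (-b) ha0 hb0 (by push_cast at hCs ⊢; exact hCs)
        have habs : |lam (-a) + lam (-b) + lam (-(-a + -b))| = |lam a + lam b + lam c| := by
          rw [show -(-a + -b) = -c by omega, hodd a, hodd b, hodd c,
            show -lam a + -lam b + -lam c = -(lam a + lam b + lam c) by ring, abs_neg]
        rw [habs] at h
        push_cast at h ⊢
        exact h
    intro k₁ k₂ k₃ h1 h2 h3 hsum hCs
    have hcases : (|k₁| ≤ |k₃| ∧ |k₂| ≤ |k₃|) ∨ (|k₁| ≤ |k₂| ∧ |k₃| ≤ |k₂|) ∨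
        (|k₂| ≤ |k₁| ∧ |k₃| ≤ |k₁|) := by
      simp only [Int.abs_eq_natAbs]; omega
    rcases hcases with ⟨u, v⟩ | ⟨u, v⟩ | ⟨u, v⟩
    · exact main k₁ k₂ k₃ h1 h2 h3 hsum u v hCs
    · have e1 : min |k₁| (min |k₂| |k₃|) = min |k₁| (min |k₃| |k₂|) := by omega
      have e2 : max |k₁| (max |k₂| |k₃|) = max |k₁| (max |k₃| |k₂|) := by omega
      have e3 : lam k₁ + lam k₂ + lam k₃ = lam k₁ + lam k₃ + lam k₂ := by ring
      rw [e1, e2, e3]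
      exact main k₁ k₃ k₂ h1 h3 h2 (by omega) u v (by rw [← e2]; exact hCs)
    · have e1 : min |k₁| (min |k₂| |k₃|) = min |k₂| (min |k₃| |k₁|) := by omega
      have e2 : max |k₁| (max |k₂| |k₃|) = max |k₂| (max |k₃| |k₁|) := by omega
      have e3 : lam k₁ + lam k₂ + lam k₃ = lam k₂ + lam k₃ + lam k₁ := by ring
      rw [e1, e2, e3]
      exact main k₂ k₃ k₁ h2 h3 h1 (by omega) u v (by rw [← e2]; exact hCs)
  -- choice of K
  set K : ℕ := ⌈C ^ (2*m - 2*r)⁻¹⌉₊ + 1 with hKdef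
  have hKC : ∀ M : ℤ, (K:ℤ) ≤ M → C ≤ (M:ℝ) ^ (2*m-2*r) := by
    intro M hM
    have h1 : C ^ (2*m-2*r)⁻¹ ≤ (K:ℝ) := by
      have := Nat.le_ceil (C ^ (2*m-2*r)⁻¹)
      have h2 : ((⌈C ^ (2*m - 2*r)⁻¹⌉₊ : ℕ) : ℝ) ≤ (K:ℝ) := by
        rw [hKdef]; push_cast; linarith
      linarith
    have h2 : C ^ (2*m-2*r)⁻¹ ≤ (M:ℝ) := le_trans h1 (by exact_mod_cast hM)
    calc C = (C ^ (2*m-2*r)⁻¹) ^ (2*m-2*r) := (Real.rpow_inv_rpow hCpos.le he.ne').symm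
      _ ≤ (M:ℝ) ^ (2*m-2*r) :=
        Real.rpow_le_rpow (Real.rpow_nonneg hCpos.le _) h2 he.le
  -- the constant c
  set sq2 : ℝ := Real.sqrt 2 with hsq2
  have hsq2pos : 0 < sq2 := Real.sqrt_pos.mpr (by norm_num)
  have hsq2m : 0 < sq2 ^ (2*m) := Real.rpow_pos_of_pos hsq2pos _
  refine ⟨c₀ / (3 * sq2 ^ (2*m) * sq2), by positivity, K, ?_⟩
  intro τ₁ τ₂ τ₃ k₁ k₂ k₃ h1 h2 h3 hτ hk hK
  set cc : ℝ := c₀ / (3 * sq2 ^ (2*m) * sq2) with hccdef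
  set M : ℤ := max |k₁| (max |k₂| |k₃|) with hMdef
  set mn : ℤ := min |k₁| (min |k₂| |k₃|) with hmndef
  have hM1 : 1 ≤ M := by
    rw [hMdef]
    exact le_trans (Int.one_le_abs h1) (le_max_left _ _)
  have hmn1 : 1 ≤ mn := by
    rw [hmndef]
    exact le_min (Int.one_le_abs h1) (le_min (Int.one_le_abs h2) (Int.one_le_abs h3))
  have hMR : (1:ℝ) ≤ (M:ℝ) := by exact_mod_cast hM1
  have hmnR : (1:ℝ) ≤ (mn:ℝ) := by exact_mod_cast hmn1
  set Jmax : ℝ := max (jbr (k₁ : ℝ)) (max (jbr (k₂ : ℝ)) (jbr (k₃ : ℝ))) with hJmaxdef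
  set Jmin : ℝ := min (jbr (k₁ : ℝ)) (min (jbr (k₂ : ℝ)) (jbr (k₃ : ℝ))) with hJmindef
  set G : ℝ := max (jbr ((τ₁ - lam k₁) / jbr (k₁ : ℝ) ^ δ))
      (max (jbr ((τ₂ - lam k₂) / jbr (k₂ : ℝ) ^ δ)) (jbr ((τ₃ - lam k₃) / jbr (k₃ : ℝ) ^ δ)))
    with hGdef
  have hJmax1 : 1 ≤ Jmax := le_trans (jbr_one_le _) (le_max_left _ _)
  have hJmaxpos : 0 < Jmax := lt_of_lt_of_le one_pos hJmax1
  have hG0 : 0 ≤ G := le_trans (jbr_pos _).le (le_max_left _ _)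
  have habsk : ∀ k : ℤ, k ≠ 0 → (1:ℝ) ≤ |(k:ℝ)| := by
    intro k hk0
    rw [← Int.cast_abs]
    exact_mod_cast Int.one_le_abs hk0
  -- F1 : Jmax ≤ sq2 * M
  have hF1 : Jmax ≤ sq2 * (M:ℝ) := by
    have step : ∀ k : ℤ, k ≠ 0 → |k| ≤ M → jbr (k:ℝ) ≤ sq2 * (M:ℝ) := by
      intro k hk0 hkM
      refine le_trans (jbr_le_sqrt2 _ (habsk k hk0)) ?_
      have : |(k:ℝ)| ≤ (M:ℝ) := by rw [← Int.cast_abs]; exact_mod_cast hkM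
      exact mul_le_mul_of_nonneg_left this hsq2pos.le
    exact max_le (step k₁ h1 (by rw [hMdef]; exact le_max_left _ _))
      (max_le (step k₂ h2 (by rw [hMdef]; exact le_trans (le_max_left _ _) (le_max_right _ _)))
        (step k₃ h3 (by rw [hMdef]; exact le_trans (le_max_right _ _) (le_max_right _ _))))
  -- F2 : Jmin ≤ sq2 * mn
  have hF2 : Jmin ≤ sq2 * (mn:ℝ) := by
    have step : ∀ k : ℤ, k ≠ 0 → |k| = mn → Jmin ≤ jbr (k:ℝ) → Jmin ≤ sq2 * (mn:ℝ) := by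
      intro k hk0 hkmn hle
      refine le_trans hle (le_trans (jbr_le_sqrt2 _ (habsk k hk0)) ?_)
      have : |(k:ℝ)| = (mn:ℝ) := by rw [← Int.cast_abs]; exact_mod_cast hkmn
      rw [this]
    have hcase : mn = |k₁| ∨ mn = |k₂| ∨ mn = |k₃| := by
      rw [hmndef]
      rcases min_choice |k₁| (min |k₂| |k₃|) with h | h
      · exact Or.inl h
      · rcases min_choice |k₂| |k₃| with g | g
        · exact Or.inr (Or.inl (by rw [h, g]))
        · exact Or.inr (Or.inr (by rw [h, g]))
    rcases hcase with h | h | h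
    · exact step k₁ h1 h.symm (min_le_left _ _)
    · exact step k₂ h2 h.symm (le_trans (min_le_right _ _) (min_le_left _ _))
    · exact step k₃ h3 h.symm (le_trans (min_le_right _ _) (min_le_right _ _))
  -- F4 : resonance lower bound
  have hF4 : c₀ * (mn:ℝ) * (M:ℝ) ^ (2*m) ≤ |lam k₁ + lam k₂ + lam k₃| :=
    key3 k₁ k₂ k₃ h1 h2 h3 hk (hKC M hK)
  -- F5 : |Σλ| ≤ 3 * Jmax^δ * G
  have hJd : 0 < Jmax ^ δ := Real.rpow_pos_of_pos hJmaxpos _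
  have hstep : ∀ (τ : ℝ) (k : ℤ), jbr (k:ℝ) ^ δ ≤ Jmax ^ δ →
      jbr ((τ - lam k) / jbr (k:ℝ) ^ δ) ≤ G → |τ - lam k| ≤ Jmax ^ δ * G := by
    intro τ k hjd hG
    have hkd : 0 < jbr (k:ℝ) ^ δ := Real.rpow_pos_of_pos (jbr_pos _) _
    have e1 : |τ - lam k| = jbr (k:ℝ) ^ δ * |(τ - lam k) / jbr (k:ℝ) ^ δ| := by
      rw [abs_div, abs_of_pos hkd]; field_simp
    rw [e1]
    exact mul_le_mul hjd (le_trans (abs_le_jbr _) hG) (abs_nonneg _) hJd.le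
  have hjd : ∀ k : ℤ, jbr (k:ℝ) ≤ Jmax → jbr (k:ℝ) ^ δ ≤ Jmax ^ δ := fun k h =>
    Real.rpow_le_rpow (jbr_pos _).le h hδ.le
  have hb1 : |τ₁ - lam k₁| ≤ Jmax ^ δ * G :=
    hstep τ₁ k₁ (hjd k₁ (le_max_left _ _)) (le_max_left _ _)
  have hb2 : |τ₂ - lam k₂| ≤ Jmax ^ δ * G :=
    hstep τ₂ k₂ (hjd k₂ (le_trans (le_max_left _ _) (le_max_right _ _)))
      (le_trans (le_max_left _ _) (le_max_right _ _))
  have hb3 : |τ₃ - lam k₃| ≤ Jmax ^ δ * G :=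
    hstep τ₃ k₃ (hjd k₃ (le_trans (le_max_right _ _) (le_max_right _ _)))
      (le_trans (le_max_right _ _) (le_max_right _ _))
  have hF5 : |lam k₁ + lam k₂ + lam k₃| ≤ 3 * (Jmax ^ δ * G) := by
    have heq : lam k₁ + lam k₂ + lam k₃
        = -((τ₁ - lam k₁) + (τ₂ - lam k₂) + (τ₃ - lam k₃)) := by linear_combination hτ
    rw [heq, abs_neg]
    calc |(τ₁ - lam k₁) + (τ₂ - lam k₂) + (τ₃ - lam k₃)|
        ≤ |(τ₁ - lam k₁) + (τ₂ - lam k₂)| + |τ₃ - lam k₃| := abs_add_le _ _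
      _ ≤ |τ₁ - lam k₁| + |τ₂ - lam k₂| + |τ₃ - lam k₃| := by
          have := abs_add_le (τ₁ - lam k₁) (τ₂ - lam k₂); linarith
      _ ≤ 3 * (Jmax ^ δ * G) := by linarith
  -- final chain
  have hmain : cc * Jmax ^ (2*m - δ) * Jmin * (3 * Jmax ^ δ) ≤ 3 * (Jmax ^ δ * G) := by
    have hexp : Jmax ^ (2*m - δ) * Jmax ^ δ = Jmax ^ (2*m) := by
      rw [← Real.rpow_add hJmaxpos]; ring_nf
    have hJmin0 : 0 ≤ Jmin := le_trans zero_le_one (le_min (jbr_one_le _) (le_min (jbr_one_le _) (jbr_one_le _)))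
    have hcc0 : 0 ≤ cc := by positivity
    calc cc * Jmax ^ (2*m - δ) * Jmin * (3 * Jmax ^ δ)
        = 3 * cc * (Jmax ^ (2*m - δ) * Jmax ^ δ) * Jmin := by ring
      _ = 3 * cc * Jmax ^ (2*m) * Jmin := by rw [hexp]
      _ ≤ 3 * cc * (sq2 * (M:ℝ)) ^ (2*m) * (sq2 * (mn:ℝ)) := by
          have g1 : Jmax ^ (2*m) ≤ (sq2 * (M:ℝ)) ^ (2*m) :=
            Real.rpow_le_rpow hJmaxpos.le hF1 (by linarith)
          have g2 : 0 ≤ 3 * cc := by linarith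
          have g3 : 0 ≤ 3 * cc * Jmax ^ (2*m) := by positivity
          calc 3 * cc * Jmax ^ (2*m) * Jmin
              ≤ 3 * cc * Jmax ^ (2*m) * (sq2 * (mn:ℝ)) :=
                mul_le_mul_of_nonneg_left hF2 g3
            _ ≤ 3 * cc * (sq2 * (M:ℝ)) ^ (2*m) * (sq2 * (mn:ℝ)) := by
                have : 0 ≤ sq2 * (mn:ℝ) := by positivity
                exact mul_le_mul_of_nonneg_right
                  (mul_le_mul_of_nonneg_left g1 g2) this
      _ = cc * (3 * sq2 ^ (2*m) * sq2) * ((mn:ℝ) * (M:ℝ) ^ (2*m)) := by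
          rw [Real.mul_rpow hsq2pos.le (by linarith : (0:ℝ) ≤ (M:ℝ))]; ring
      _ = c₀ * ((mn:ℝ) * (M:ℝ) ^ (2*m)) := by
          rw [hccdef]; field_simp
      _ ≤ |lam k₁ + lam k₂ + lam k₃| := by
          have : c₀ * ((mn:ℝ) * (M:ℝ) ^ (2*m)) = c₀ * (mn:ℝ) * (M:ℝ) ^ (2*m) := by ring
          rw [this]; exact hF4
      _ ≤ 3 * (Jmax ^ δ * G) := hF5
  have h3Jd : 0 < 3 * Jmax ^ δ := by positivity
  have := (mul_le_mul_iff_left₀ h3Jd).mp (by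
    calc cc * Jmax ^ (2*m - δ) * Jmin * (3 * Jmax ^ δ)
        ≤ 3 * (Jmax ^ δ * G) := hmain
      _ = G * (3 * Jmax ^ δ) := by ring)
  exact this
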